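/- arXiv:1202.6101 — 2 statements merged into one kernel-verified Lean document; each statement's English description precedes it below -/
import Mathlib

section
/- Let E be a real inner product space, let q₀ ∈ E and p₀ ∈ E be nonzero, let ω_q ≥ 0, let R_p ≥ 0, and let φ = angle(q₀, p₀). Then for every unit vector q ∈ E with angle(q₀, q) ≤ ω_q and every point p with ‖p − p₀‖ ≤ R_p, one has ⟪q, p⟫ ≤ ‖p₀‖ · cos(max(φ − ω_q, 0)) + R_p. (Paper's Theorem 3: upper bound on the maximum inner product between any unit-norm query in an open cone of half-aperture ω_q around axis q₀ and any point in the ball B(p₀, R_p).) -/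
open RealInnerProductSpace InnerProductGeometry

private lemma key_cs {E : Type*} [NormedAddCommGroup E] [InnerProductSpace ℝ E]
    (a q u : E) (ha : ‖a‖ = 1) (hq : ‖q‖ = 1) (hu : ‖u‖ = 1) :
    ⟪q, u⟫ ≤ ⟪a, q⟫ * ⟪a, u⟫ +
      Real.sqrt (1 - ⟪a, q⟫ ^ 2) * Real.sqrt (1 - ⟪a, u⟫ ^ 2) := by
  set q' := q - ⟪a, q⟫ • a with hq'
  set u' := u - ⟪a, u⟫ • a with hu'
  have haa : ⟪a, a⟫ = 1 := by
    rw [real_inner_self_eq_norm_sq, ha]; norm_num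
  have h1 : ⟪q', u'⟫ = ⟪q, u⟫ - ⟪a, q⟫ * ⟪a, u⟫ := by
    simp [hq', hu', inner_sub_left, inner_sub_right, inner_smul_left, inner_smul_right,
      haa, real_inner_comm q a, real_inner_comm u a, ha]
  have h2 : ‖q'‖ ^ 2 = 1 - ⟪a, q⟫ ^ 2 := by
    rw [← real_inner_self_eq_norm_sq]
    simp only [hq', inner_sub_left, inner_sub_right, inner_smul_left, inner_smul_right,
      haa, real_inner_comm q a, real_inner_self_eq_norm_sq, hq, ha, RCLike.conj_to_real]
    ring
  have h3 : ‖u'‖ ^ 2 = 1 - ⟪a, u⟫ ^ 2 := by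
    rw [← real_inner_self_eq_norm_sq]
    simp only [hu', inner_sub_left, inner_sub_right, inner_smul_left, inner_smul_right,
      haa, real_inner_comm u a, real_inner_self_eq_norm_sq, hu, ha, RCLike.conj_to_real]
    ring
  have hcs : ⟪q', u'⟫ ≤ ‖q'‖ * ‖u'‖ := real_inner_le_norm q' u'
  have hnq : ‖q'‖ = Real.sqrt (1 - ⟪a, q⟫ ^ 2) := by
    rw [← h2, Real.sqrt_sq (norm_nonneg _)]
  have hnu : ‖u'‖ = Real.sqrt (1 - ⟪a, u⟫ ^ 2) := by
    rw [← h3, Real.sqrt_sq (norm_nonneg _)]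
  rw [h1, hnq, hnu] at hcs
  linarith

theorem cone_ball_mip_bound {E : Type*} [NormedAddCommGroup E] [InnerProductSpace ℝ E]
    (q₀ p₀ : E) (hq₀ : q₀ ≠ 0) (hp₀ : p₀ ≠ 0)
    (ωq Rp : ℝ) (hω : 0 ≤ ωq) (hRp : 0 ≤ Rp)
    (q : E) (hq : ‖q‖ = 1) (hqangle : angle q₀ q ≤ ωq)
    (p : E) (hp : ‖p - p₀‖ ≤ Rp) :
    ⟪q, p⟫ ≤ ‖p₀‖ * Real.cos (max (angle q₀ p₀ - ωq) 0) + Rp := by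
  have hqne : q ≠ 0 := by intro h; rw [h, norm_zero] at hq; norm_num at hq
  -- second term
  have hsplit : ⟪q, p⟫ = ⟪q, p₀⟫ + ⟪q, p - p₀⟫ := by
    rw [← inner_add_right, add_sub_cancel]
  have h2 : ⟪q, p - p₀⟫ ≤ Rp := by
    calc ⟪q, p - p₀⟫ ≤ ‖q‖ * ‖p - p₀‖ := real_inner_le_norm _ _
    _ ≤ Rp := by rw [hq, one_mul]; exact hp
  -- first term
  have hmain : ⟪q, p₀⟫ ≤ ‖p₀‖ * Real.cos (max (angle q₀ p₀ - ωq) 0) := by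
    rcases le_or_gt (angle q₀ p₀ - ωq) 0 with hcase | hcase
    · rw [max_eq_right hcase, Real.cos_zero]
      calc ⟪q, p₀⟫ ≤ ‖q‖ * ‖p₀‖ := real_inner_le_norm _ _
      _ = ‖p₀‖ * 1 := by rw [hq]; ring
    · rw [max_eq_left hcase.le]
      set a := ‖q₀‖⁻¹ • q₀ with hadef
      set u := ‖p₀‖⁻¹ • p₀ with hudef
      have hq₀pos : (0:ℝ) < ‖q₀‖ := norm_pos_iff.mpr hq₀
      have hp₀pos : (0:ℝ) < ‖p₀‖ := norm_pos_iff.mpr hp₀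
      have ha : ‖a‖ = 1 := by
        rw [hadef, norm_smul, norm_inv, norm_norm, inv_mul_cancel₀ hq₀pos.ne']
      have hu : ‖u‖ = 1 := by
        rw [hudef, norm_smul, norm_inv, norm_norm, inv_mul_cancel₀ hp₀pos.ne']
      have hαeq : angle a q = angle q₀ q :=
        angle_smul_left_of_pos q₀ q (inv_pos.mpr hq₀pos)
      have hβeq : angle a u = angle q₀ p₀ := by
        rw [hadef, hudef, angle_smul_left_of_pos _ _ (inv_pos.mpr hq₀pos),
          angle_smul_right_of_pos _ _ (inv_pos.mpr hp₀pos)]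
      set α := angle a q with hα
      set β := angle a u with hβ
      have hca : ⟪a, q⟫ = Real.cos α := by
        rw [hα, cos_angle, ha, hq]; norm_num
      have hcb : ⟪a, u⟫ = Real.cos β := by
        rw [hβ, cos_angle, ha, hu]; norm_num
      have hkey := key_cs a q u ha hq hu
      rw [hca, hcb] at hkey
      have hsa : Real.sqrt (1 - Real.cos α ^ 2) = Real.sin α :=
        (Real.sin_eq_sqrt_one_sub_cos_sq (angle_nonneg a q) (angle_le_pi a q)).symm
      have hsb : Real.sqrt (1 - Real.cos β ^ 2) = Real.sin β :=
        (Real.sin_eq_sqrt_one_sub_cos_sq (angle_nonneg a u) (angle_le_pi a u)).symm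
      rw [hsa, hsb] at hkey
      have hcos : Real.cos α * Real.cos β + Real.sin α * Real.sin β = Real.cos (β - α) := by
        rw [Real.cos_sub]; ring
      have hqu : ⟪q, u⟫ ≤ Real.cos (β - α) := by rw [← hcos]; linarith
      have hmono : Real.cos (β - α) ≤ Real.cos (angle q₀ p₀ - ωq) := by
        apply Real.cos_le_cos_of_nonneg_of_le_pi
        · rw [hβeq] at *; linarith [hαeq ▸ hqangle]
        · have := angle_le_pi a u
          have := angle_nonneg a q
          linarith
        · rw [hβeq]; linarith [hαeq ▸ hqangle]
      have hfinal : ⟪q, u⟫ ≤ Real.cos (angle q₀ p₀ - ωq) := le_trans hqu hmono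
      have hpu : ⟪q, p₀⟫ = ‖p₀‖ * ⟪q, u⟫ := by
        rw [hudef, inner_smul_right]
        field_simp
      rw [hpu]
      exact mul_le_mul_of_nonneg_left hfinal hp₀pos.le
  linarith
end

section
/- Let E be a real inner product space and let p₀, q₀, p, q ∈ E be nonzero vectors such that angle(p₀, p) + angle(q₀, q) ≤ angle(p₀, q₀). Then ⟪q, p⟫ ≤ ‖p‖ · ‖q‖ · cos(angle(p₀, q₀) − (angle(p₀, p) + angle(q₀, q))). (This is the two-ball angle bound, derived from the triangle inequality of angles, used in the proof of Theorem 2.) -/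
open RealInnerProductSpace InnerProductGeometry Real

private lemma unit_inner_bound {E : Type*} [NormedAddCommGroup E] [InnerProductSpace ℝ E]
    {x y z : E} (hx : ‖x‖ = 1) (hy : ‖y‖ = 1) (hz : ‖z‖ = 1) :
    ⟪x, y⟫ * ⟪y, z⟫ - Real.sqrt (1 - ⟪x, y⟫ ^ 2) * Real.sqrt (1 - ⟪y, z⟫ ^ 2) ≤ ⟪x, z⟫ := by
  set a : ℝ := ⟪x, y⟫ with ha
  set b : ℝ := ⟪y, z⟫ with hb
  have hinner : ⟪x - a • y, z - b • y⟫ = ⟪x, z⟫ - a * b := by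
    simp [inner_sub_left, inner_sub_right, inner_smul_left, inner_smul_right,
      real_inner_self_eq_norm_sq, hy, real_inner_comm y z, ← ha, ← hb]
  have hnx : ‖x - a • y‖ = Real.sqrt (1 - a ^ 2) := by
    rw [← Real.sqrt_sq (norm_nonneg _)]
    congr 1
    rw [← real_inner_self_eq_norm_sq, inner_sub_left]
    simp [norm_smul, inner_sub_left, inner_sub_right, inner_smul_left, inner_smul_right,
      real_inner_self_eq_norm_sq, hx, hy, real_inner_comm x y, ← ha]
    ring
  have hnz : ‖z - b • y‖ = Real.sqrt (1 - b ^ 2) := by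
    rw [← Real.sqrt_sq (norm_nonneg _)]
    congr 1
    rw [← real_inner_self_eq_norm_sq, inner_sub_left]
    simp [norm_smul, inner_sub_left, inner_sub_right, inner_smul_left, inner_smul_right,
      real_inner_self_eq_norm_sq, hy, hz, real_inner_comm y z, ← hb]
    ring
  have hcs := abs_real_inner_le_norm (x - a • y) (z - b • y)
  rw [hinner, hnx, hnz] at hcs
  have := neg_abs_le (⟪x, z⟫ - a * b)
  linarith [abs_le.mp hcs |>.2, abs_le.mp hcs |>.1]

private lemma angle_triangle' {E : Type*} [NormedAddCommGroup E] [InnerProductSpace ℝ E]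
    {x y z : E} (hx : ‖x‖ = 1) (hy : ‖y‖ = 1) (hz : ‖z‖ = 1) :
    angle x z ≤ angle x y + angle y z := by
  by_cases hpi : π ≤ angle x y + angle y z
  · exact le_trans (angle_le_pi x z) hpi
  push_neg at hpi
  have hcos : Real.cos (angle x y + angle y z) ≤ Real.cos (angle x z) := by
    rw [Real.cos_add]
    have cxy : Real.cos (angle x y) = ⟪x, y⟫ := by rw [cos_angle, hx, hy]; simp
    have cyz : Real.cos (angle y z) = ⟪y, z⟫ := by rw [cos_angle, hy, hz]; simp
    have cxz : Real.cos (angle x z) = ⟪x, z⟫ := by rw [cos_angle, hx, hz]; simp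
    have sxy : Real.sin (angle x y) = Real.sqrt (1 - ⟪x, y⟫ ^ 2) := by
      rw [InnerProductGeometry.angle, Real.sin_arccos, hx, hy]; simp
    have syz : Real.sin (angle y z) = Real.sqrt (1 - ⟪y, z⟫ ^ 2) := by
      rw [InnerProductGeometry.angle, Real.sin_arccos, hy, hz]; simp
    rw [cxy, cyz, cxz, sxy, syz]
    exact unit_inner_bound hx hy hz
  by_contra hlt
  push_neg at hlt
  have := Real.cos_lt_cos_of_nonneg_of_le_pi
    (add_nonneg (angle_nonneg x y) (angle_nonneg y z)) (angle_le_pi x z) hlt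
  linarith

private lemma angle_triangle {E : Type*} [NormedAddCommGroup E] [InnerProductSpace ℝ E]
    {x y z : E} (hx : x ≠ 0) (hy : y ≠ 0) (hz : z ≠ 0) :
    angle x z ≤ angle x y + angle y z := by
  have nx : (0:ℝ) < ‖x‖⁻¹ := inv_pos.mpr (norm_pos_iff.mpr hx)
  have ny : (0:ℝ) < ‖y‖⁻¹ := inv_pos.mpr (norm_pos_iff.mpr hy)
  have nz : (0:ℝ) < ‖z‖⁻¹ := inv_pos.mpr (norm_pos_iff.mpr hz)
  have hux : ‖(‖x‖⁻¹ • x)‖ = 1 := norm_smul_inv_norm hx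
  have huy : ‖(‖y‖⁻¹ • y)‖ = 1 := norm_smul_inv_norm hy
  have huz : ‖(‖z‖⁻¹ • z)‖ = 1 := norm_smul_inv_norm hz
  have h1 : angle x z = angle (‖x‖⁻¹ • x) (‖z‖⁻¹ • z) := by
    rw [angle_smul_left_of_pos _ _ nx, angle_smul_right_of_pos _ _ nz]
  have h2 : angle x y = angle (‖x‖⁻¹ • x) (‖y‖⁻¹ • y) := by
    rw [angle_smul_left_of_pos _ _ nx, angle_smul_right_of_pos _ _ ny]
  have h3 : angle y z = angle (‖y‖⁻¹ • y) (‖z‖⁻¹ • z) := by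
    rw [angle_smul_left_of_pos _ _ ny, angle_smul_right_of_pos _ _ nz]
  rw [h1, h2, h3]
  exact angle_triangle' hux huy huz

theorem two_ball_angle_bound {E : Type*} [NormedAddCommGroup E] [InnerProductSpace ℝ E]
    (p₀ q₀ p q : E) (hp₀ : p₀ ≠ 0) (hq₀ : q₀ ≠ 0) (hp : p ≠ 0) (hq : q ≠ 0)
    (h : angle p₀ p + angle q₀ q ≤ angle p₀ q₀) :
    ⟪q, p⟫ ≤ ‖p‖ * ‖q‖ * Real.cos (angle p₀ q₀ - (angle p₀ p + angle q₀ q)) := by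
  have t1 : angle p₀ q₀ ≤ angle p₀ p + angle p q₀ := angle_triangle hp₀ hp hq₀
  have t2 : angle p q₀ ≤ angle p q + angle q q₀ := angle_triangle hp hq hq₀
  have hqq : angle q q₀ = angle q₀ q := angle_comm q q₀
  have hD : angle p₀ q₀ - (angle p₀ p + angle q₀ q) ≤ angle q p := by
    rw [angle_comm q p]; linarith
  have hD0 : 0 ≤ angle p₀ q₀ - (angle p₀ p + angle q₀ q) := by linarith
  have hcos : Real.cos (angle q p) ≤
      Real.cos (angle p₀ q₀ - (angle p₀ p + angle q₀ q)) := by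
    rcases eq_or_lt_of_le hD with heq | hlt
    · rw [heq]
    · exact le_of_lt (Real.cos_lt_cos_of_nonneg_of_le_pi hD0 (angle_le_pi q p) hlt)
  have hin : ⟪q, p⟫ = Real.cos (angle q p) * (‖q‖ * ‖p‖) :=
    (cos_angle_mul_norm_mul_norm q p).symm
  rw [hin]
  calc Real.cos (angle q p) * (‖q‖ * ‖p‖)
      ≤ Real.cos (angle p₀ q₀ - (angle p₀ p + angle q₀ q)) * (‖q‖ * ‖p‖) := by
        apply mul_le_mul_of_nonneg_right hcos (by positivity)
    _ = ‖p‖ * ‖q‖ * Real.cos (angle p₀ q₀ - (angle p₀ p + angle q₀ q)) := by ring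
end
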